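/- The sum of the coefficients of the polynomial (s_X + s_Y)^{2m-p-1} (s_Y + s_Z)^{n-1} (s_X + s_Z)^p reduced modulo the ideal ⟨s_X^{n+1}, s_Y^{p+1}, s_Z^{2m-p-1}⟩ equals δ(m,n,p) = Σ_ℓ C(2m-p-1, n-ℓ) · C(n-1, 2m-2p-2+ℓ) · C(p, ℓ), where ℓ ranges over max{0, n-2m+p+1} ≤ ℓ ≤ min{p, n-2m+2p+1}. -/
import Mathlib


open MvPolynomial Finset

/-- The multilinear Bézout number
`δ(m,n,p) = Σ_ℓ C(2m-p-1, n-ℓ)·C(n-1, 2m-2p-2+ℓ)·C(p, ℓ)`, the sum ranging over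
`max {0, n-2m+p+1} ≤ ℓ ≤ min {p, n-2m+2p+1}` (truncated subtraction realizes the max). -/
def hdelta (m n p : ℕ) : ℕ :=
  ∑ ℓ ∈ Finset.Icc (n + p + 1 - 2 * m) (min p (n + 2 * p + 1 - 2 * m)),
    Nat.choose (2 * m - p - 1) (n - ℓ) *
      Nat.choose (n - 1) (2 * m - 2 * p - 2 + ℓ) * Nat.choose p ℓ

lemma deg3 (a b c : ℕ) :
    Finsupp.degree (Finsupp.single (0:Fin 3) a + Finsupp.single 1 b + Finsupp.single 2 c)
      = a + b + c := by
  simp [Finsupp.degree_eq_weight_one, map_add, Finsupp.weight_apply, Finsupp.sum_single_index]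

lemma sum_singles_eq (x1 y1 y2 z2 x3 z3 a b c : ℕ) :
    (Finsupp.single (0:Fin 3) x1 + Finsupp.single 1 y1 +
      (Finsupp.single 1 y2 + Finsupp.single 2 z2) +
      (Finsupp.single 0 x3 + Finsupp.single 2 z3)
      = Finsupp.single 0 a + Finsupp.single 1 b + Finsupp.single 2 c)
    ↔ (x1 + x3 = a ∧ y1 + y2 = b ∧ z2 + z3 = c) := by
  constructor
  · intro h
    have h0 := DFunLike.congr_fun h (0:Fin 3)
    have h1 := DFunLike.congr_fun h (1:Fin 3)
    have h2 := DFunLike.congr_fun h (2:Fin 3)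
    simp [Finsupp.single_apply] at h0 h1 h2
    exact ⟨by omega, by omega, by omega⟩
  · rintro ⟨e1, e2, e3⟩
    ext x
    fin_cases x <;> simp [Finsupp.single_apply] <;> omega

lemma pow_add_X (u v : Fin 3) (e : ℕ) :
    ((X u + X v : MvPolynomial (Fin 3) ℚ)) ^ e
      = ∑ i ∈ Finset.range (e+1),
          monomial (Finsupp.single u i + Finsupp.single v (e - i)) ((e.choose i : ℚ)) := by
  rw [add_pow]
  refine Finset.sum_congr rfl fun i _ => ?_
  rw [X_pow_eq_monomial, X_pow_eq_monomial, monomial_mul, mul_one,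
    ← map_natCast (C : ℚ →+* MvPolynomial (Fin 3) ℚ) (e.choose i), mul_comm,
    C_mul_monomial, mul_one]

lemma coeff_expand (A B Cc a b c : ℕ) :
    MvPolynomial.coeff (Finsupp.single (0:Fin 3) a + Finsupp.single 1 b + Finsupp.single 2 c)
      (((X 0 + X 1) ^ A * (X 1 + X 2) ^ B * (X 0 + X 2) ^ Cc : MvPolynomial (Fin 3) ℚ))
    = ∑ i ∈ Finset.range (A+1), ∑ k ∈ Finset.range (Cc+1), ∑ j ∈ Finset.range (B+1),
        if i + k = a ∧ (A - i) + j = b ∧ (B - j) + (Cc - k) = c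
        then ((A.choose i : ℚ) * (B.choose j) * (Cc.choose k)) else 0 := by
  rw [pow_add_X, pow_add_X, pow_add_X, Finset.sum_mul_sum, Finset.sum_mul_sum]
  simp only [Finset.sum_mul, coeff_sum, monomial_mul, coeff_monomial]
  refine Finset.sum_congr rfl fun i hi => Finset.sum_congr rfl fun k hk =>
    Finset.sum_congr rfl fun j hj => ?_
  simp only [sum_singles_eq]

lemma hdelta_eq (m n p : ℕ) (hm : 0 < m) (hn : 0 < n) (hp : 0 < p) (hpm : p ≤ m - 1) :
    hdelta m n p = ∑ k ∈ Finset.range (p+1),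
      Nat.choose (2*m-p-1) (n-k) * Nat.choose (n-1) (2*m-2*p-2+k) * Nat.choose p k := by
  rw [hdelta]
  apply Finset.sum_subset
  · intro x hx
    rw [Finset.mem_Icc] at hx
    rw [Finset.mem_range]
    omega
  · intro x hx hnx
    rw [Finset.mem_range] at hx
    rw [Finset.mem_Icc] at hnx
    by_cases hlo : n + p + 1 - 2*m ≤ x
    · have hhi : n + 2*p + 1 - 2*m < x := by omega
      have : n - 1 < 2*m - 2*p - 2 + x := by omega
      simp [Nat.choose_eq_zero_of_lt this]
    · have : 2*m - p - 1 < n - x := by omega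
      simp [Nat.choose_eq_zero_of_lt this]

/-- The sum of the coefficients of the polynomial
`(s_X + s_Y)^{2m-p-1} (s_Y + s_Z)^{n-1} (s_X + s_Z)^p` reduced modulo the ideal
`⟨s_X^{n+1}, s_Y^{p+1}, s_Z^{2m-p-1}⟩` (i.e. the sum of the coefficients of the
monomials `s_X^a s_Y^b s_Z^c` with `a ≤ n`, `b ≤ p`, `c ≤ 2m-p-2`) equals
`δ(m,n,p)`. -/
theorem coeff_sum_eq_hdelta (m n p : ℕ) (hm : 0 < m) (hn : 0 < n) (hp : 0 < p)
    (hpm : p ≤ m - 1) :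
    ∑ a ∈ Finset.range (n + 1), ∑ b ∈ Finset.range (p + 1),
      ∑ c ∈ Finset.range (2 * m - p - 1),
        MvPolynomial.coeff
          (Finsupp.single 0 a + Finsupp.single 1 b + Finsupp.single 2 c)
          (((X 0 + X 1) ^ (2 * m - p - 1) * (X 1 + X 2) ^ (n - 1) *
              (X 0 + X 2) ^ p : MvPolynomial (Fin 3) ℚ))
      = (hdelta m n p : ℚ) := by
  have hm2 : 2 ≤ m := by omega
  set P : MvPolynomial (Fin 3) ℚ :=
    (X 0 + X 1) ^ (2 * m - p - 1) * (X 1 + X 2) ^ (n - 1) * (X 0 + X 2) ^ p with hP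
  have hhom : P.IsHomogeneous ((2*m-p-1) + (n-1) + p) := by
    have h1 : ((X 0 + X 1 : MvPolynomial (Fin 3) ℚ) ^ (2*m-p-1)).IsHomogeneous (2*m-p-1) := by
      simpa using (((isHomogeneous_X ℚ 0).add (isHomogeneous_X ℚ 1)).pow (2*m-p-1))
    have h2 : ((X 1 + X 2 : MvPolynomial (Fin 3) ℚ) ^ (n-1)).IsHomogeneous (n-1) := by
      simpa using (((isHomogeneous_X ℚ 1).add (isHomogeneous_X ℚ 2)).pow (n-1))
    have h3 : ((X 0 + X 2 : MvPolynomial (Fin 3) ℚ) ^ p).IsHomogeneous p := by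
      simpa using (((isHomogeneous_X ℚ 0).add (isHomogeneous_X ℚ 2)).pow p)
    exact (h1.mul h2).mul h3
  have hz : ∀ a b c : ℕ, a ≤ n → b ≤ p → c ≤ 2*m-p-2 →
      ¬(a = n ∧ b = p ∧ c = 2*m-p-2) →
      MvPolynomial.coeff
        (Finsupp.single (0:Fin 3) a + Finsupp.single 1 b + Finsupp.single 2 c) P = 0 := by
    intro a b c ha hb hc hne
    apply hhom.coeff_eq_zero
    rw [deg3]
    omega
  rw [Finset.sum_eq_single_of_mem n (Finset.self_mem_range_succ n)
    (fun a ha hane => Finset.sum_eq_zero fun b hb => Finset.sum_eq_zero fun c hc => by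
      rw [Finset.mem_range] at hb hc
      exact hz a b c (by rw [Finset.mem_range] at ha; omega) (by omega) (by omega)
        (by rintro ⟨h, -, -⟩; exact hane h))]
  rw [Finset.sum_eq_single_of_mem p (Finset.self_mem_range_succ p)
    (fun b hb hbne => Finset.sum_eq_zero fun c hc => by
      rw [Finset.mem_range] at hb hc
      exact hz n b c le_rfl (by omega) (by omega) (by rintro ⟨-, h, -⟩; exact hbne h))]
  rw [Finset.sum_eq_single_of_mem (2*m-p-2) (by rw [Finset.mem_range]; omega)
    (fun c hc hcne => by
      rw [Finset.mem_range] at hc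
      exact hz n p c le_rfl le_rfl (by omega) (by rintro ⟨-, -, h⟩; exact hcne h))]
  rw [hP, coeff_expand, Finset.sum_comm, hdelta_eq m n p hm hn hp hpm]
  push_cast
  refine Finset.sum_congr rfl fun k hk => ?_
  rw [Finset.mem_range] at hk
  by_cases hcase : k ≤ n ∧ n - k ≤ 2*m-p-1 ∧ (2*m-p-1) - (n-k) ≤ p
  · rw [Finset.sum_eq_single_of_mem (n - k) (by rw [Finset.mem_range]; omega)
      (fun i hi hine => Finset.sum_eq_zero fun j hj => by
        rw [Finset.mem_range] at hi hj
        exact if_neg (by omega))]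
    rw [Finset.sum_eq_single_of_mem (p - ((2*m-p-1) - (n-k)))
      (by rw [Finset.mem_range]; omega)
      (fun j hj hjne => by
        rw [Finset.mem_range] at hj
        exact if_neg (by omega))]
    rw [if_pos (by omega)]
    have hj0 : (2*m-2*p-2+k) = (n-1) - (p - ((2*m-p-1) - (n-k))) := by omega
    rw [hj0, Nat.choose_symm (by omega)]
  · have hLHS : ∀ i ∈ Finset.range (2*m-p-1+1), ∀ j ∈ Finset.range (n-1+1),
        ¬(i + k = n ∧ ((2*m-p-1) - i) + j = p ∧ ((n-1) - j) + (p - k) = 2*m-p-2) := by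
      intro i hi j hj
      rw [Finset.mem_range] at hi hj
      omega
    rw [Finset.sum_eq_zero fun i hi => Finset.sum_eq_zero fun j hj =>
      if_neg (hLHS i hi j hj)]
    have : (n-1) < 2*m-2*p-2+k ∨ (2*m-p-1) < n - k := by omega
    rcases this with h | h
    · rw [Nat.choose_eq_zero_of_lt h]
      push_cast
      ring
    · rw [Nat.choose_eq_zero_of_lt h]
      push_cast
      ring
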